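/- Let U = (u_{kl}) for k ∈ {i-1,i,i+1}, l ∈ {j-1,j,j+1} with all u_{kl} ∈ [m, M], let f, g be differentiable on [m, M] with |f'| ≤ L_f and |g'| ≤ L_g there, and let λ₁, λ₂ > 0 satisfy λ₁L_f + λ₂L_g ≤ 1/3. Then the quantity (1/36)(u_{i-1,j-1} + 4u_{i,j-1} + u_{i+1,j-1} + 4u_{i-1,j} + 16u_{i,j} + 4u_{i+1,j} + u_{i-1,j+1} + 4u_{i,j+1} + u_{i+1,j+1}) - (λ₁/12)(f(u_{i+1,j-1}) - f(u_{i-1,j-1}) + 4f(u_{i+1,j}) - 4f(u_{i-1,j}) + f(u_{i+1,j+1}) - f(u_{i-1,j+1})) - (λ₂/12)(g(u_{i-1,j+1}) - g(u_{i-1,j-1}) + 4g(u_{i,j+1}) - 4g(u_{i,j-1}) + g(u_{i+1,j+1}) - g(u_{i+1,j-1})) lies in [m, M]. -/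
import Mathlib


theorem stmt_14 (m M Lf Lg lam1 lam2 : ℝ) (hmM : m ≤ M)
    (u : Fin 3 → Fin 3 → ℝ) (hu : ∀ k l, u k l ∈ Set.Icc m M)
    (f g f' g' : ℝ → ℝ)
    (hf : ∀ x ∈ Set.Icc m M, HasDerivAt f (f' x) x)
    (hg : ∀ x ∈ Set.Icc m M, HasDerivAt g (g' x) x)
    (hLf : ∀ x ∈ Set.Icc m M, |f' x| ≤ Lf)
    (hLg : ∀ x ∈ Set.Icc m M, |g' x| ≤ Lg)
    (hlam1 : 0 < lam1) (hlam2 : 0 < lam2)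
    (hcfl : lam1 * Lf + lam2 * Lg ≤ 1 / 3) :
    (1 / 36) * (u 0 0 + 4 * u 1 0 + u 2 0 + 4 * u 0 1 + 16 * u 1 1 + 4 * u 2 1
        + u 0 2 + 4 * u 1 2 + u 2 2)
      - (lam1 / 12) * (f (u 2 0) - f (u 0 0) + 4 * f (u 2 1) - 4 * f (u 0 1)
        + f (u 2 2) - f (u 0 2))
      - (lam2 / 12) * (g (u 0 2) - g (u 0 0) + 4 * g (u 1 2) - 4 * g (u 1 0)
        + g (u 2 2) - g (u 2 0)) ∈ Set.Icc m M := by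
  have hm : m ∈ Set.Icc m M := Set.left_mem_Icc.2 hmM
  have hM : M ∈ Set.Icc m M := Set.right_mem_Icc.2 hmM
  have hLf0 : 0 ≤ Lf := le_trans (abs_nonneg _) (hLf m hm)
  have hLg0 : 0 ≤ Lg := le_trans (abs_nonneg _) (hLg m hm)
  have key : ∀ (F F' : ℝ → ℝ) (L : ℝ), (∀ x ∈ Set.Icc m M, HasDerivAt F (F' x) x) →
      (∀ x ∈ Set.Icc m M, |F' x| ≤ L) → ∀ a ∈ Set.Icc m M, ∀ b ∈ Set.Icc m M,
      |F a - F b| ≤ L * |a - b| := by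
    intro F F' L hF hL a ha b hb
    have := Convex.norm_image_sub_le_of_norm_hasDerivWithin_le
      (fun x hx => (hF x hx).hasDerivWithinAt) (fun x hx => by simpa using hL x hx)
      (convex_Icc m M) hb ha
    simpa [Real.norm_eq_abs] using this
  have dm : ∀ k l, 0 ≤ u k l - m := fun k l => sub_nonneg.2 (hu k l).1
  have dM : ∀ k l, 0 ≤ M - u k l := fun k l => sub_nonneg.2 (hu k l).2
  have fbm : ∀ k l, f (u k l) - f m ≤ Lf * (u k l - m) ∧ f m - f (u k l) ≤ Lf * (u k l - m) := by
    intro k l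
    have h := key f f' Lf hf hLf (u k l) (hu k l) m hm
    rw [abs_of_nonneg (dm k l)] at h
    exact abs_sub_le_iff.mp h
  have fbM : ∀ k l, f M - f (u k l) ≤ Lf * (M - u k l) ∧ f (u k l) - f M ≤ Lf * (M - u k l) := by
    intro k l
    have h := key f f' Lf hf hLf M hM (u k l) (hu k l)
    rw [abs_of_nonneg (dM k l)] at h
    exact abs_sub_le_iff.mp h
  have gbm : ∀ k l, g (u k l) - g m ≤ Lg * (u k l - m) ∧ g m - g (u k l) ≤ Lg * (u k l - m) := by
    intro k l
    have h := key g g' Lg hg hLg (u k l) (hu k l) m hm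
    rw [abs_of_nonneg (dm k l)] at h
    exact abs_sub_le_iff.mp h
  have gbM : ∀ k l, g M - g (u k l) ≤ Lg * (M - u k l) ∧ g (u k l) - g M ≤ Lg * (M - u k l) := by
    intro k l
    have h := key g g' Lg hg hLg M hM (u k l) (hu k l)
    rw [abs_of_nonneg (dM k l)] at h
    exact abs_sub_le_iff.mp h
  have Fm : ∀ k l, lam1 * (f (u k l) - f m) ≤ lam1 * (Lf * (u k l - m)) ∧
      lam1 * (f m - f (u k l)) ≤ lam1 * (Lf * (u k l - m)) := fun k l =>
    ⟨mul_le_mul_of_nonneg_left (fbm k l).1 hlam1.le,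
     mul_le_mul_of_nonneg_left (fbm k l).2 hlam1.le⟩
  have FM : ∀ k l, lam1 * (f M - f (u k l)) ≤ lam1 * (Lf * (M - u k l)) ∧
      lam1 * (f (u k l) - f M) ≤ lam1 * (Lf * (M - u k l)) := fun k l =>
    ⟨mul_le_mul_of_nonneg_left (fbM k l).1 hlam1.le,
     mul_le_mul_of_nonneg_left (fbM k l).2 hlam1.le⟩
  have Gm : ∀ k l, lam2 * (g (u k l) - g m) ≤ lam2 * (Lg * (u k l - m)) ∧
      lam2 * (g m - g (u k l)) ≤ lam2 * (Lg * (u k l - m)) := fun k l =>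
    ⟨mul_le_mul_of_nonneg_left (gbm k l).1 hlam2.le,
     mul_le_mul_of_nonneg_left (gbm k l).2 hlam2.le⟩
  have GM : ∀ k l, lam2 * (g M - g (u k l)) ≤ lam2 * (Lg * (M - u k l)) ∧
      lam2 * (g (u k l) - g M) ≤ lam2 * (Lg * (M - u k l)) := fun k l =>
    ⟨mul_le_mul_of_nonneg_left (gbM k l).1 hlam2.le,
     mul_le_mul_of_nonneg_left (gbM k l).2 hlam2.le⟩
  have hK : 0 ≤ 1 / 3 - (lam1 * Lf + lam2 * Lg) := by linarith
  have hc1 : 0 ≤ lam1 * Lf := mul_nonneg hlam1.le hLf0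
  have hc2 : 0 ≤ lam2 * Lg := mul_nonneg hlam2.le hLg0
  constructor
  · linarith [dm 0 0, dm 0 1, dm 0 2, dm 1 0, dm 1 1, dm 1 2, dm 2 0, dm 2 1, dm 2 2, (Fm 0 0).1, (Fm 0 0).2, (Fm 2 0).1, (Fm 2 0).2, (Fm 0 1).1, (Fm 0 1).2, (Fm 2 1).1, (Fm 2 1).2, (Fm 0 2).1, (Fm 0 2).2, (Fm 2 2).1, (Fm 2 2).2, (Gm 0 0).1, (Gm 0 0).2, (Gm 1 0).1, (Gm 1 0).2, (Gm 2 0).1, (Gm 2 0).2, (Gm 0 2).1, (Gm 0 2).2, (Gm 1 2).1, (Gm 1 2).2, (Gm 2 2).1, (Gm 2 2).2, mul_nonneg hK (dm 0 0), mul_nonneg hc1 (dm 0 0), mul_nonneg hc2 (dm 0 0), mul_nonneg hK (dm 1 0), mul_nonneg hc1 (dm 1 0), mul_nonneg hc2 (dm 1 0), mul_nonneg hK (dm 2 0), mul_nonneg hc1 (dm 2 0), mul_nonneg hc2 (dm 2 0), mul_nonneg hK (dm 0 1), mul_nonneg hc1 (dm 0 1), mul_nonneg hc2 (dm 0 1),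 mul_nonneg hK (dm 2 1), mul_nonneg hc1 (dm 2 1), mul_nonneg hc2 (dm 2 1), mul_nonneg hK (dm 0 2), mul_nonneg hc1 (dm 0 2), mul_nonneg hc2 (dm 0 2), mul_nonneg hK (dm 1 2), mul_nonneg hc1 (dm 1 2), mul_nonneg hc2 (dm 1 2), mul_nonneg hK (dm 2 2), mul_nonneg hc1 (dm 2 2), mul_nonneg hc2 (dm 2 2)]
  · linarith [dM 0 0, dM 0 1, dM 0 2, dM 1 0, dM 1 1, dM 1 2, dM 2 0, dM 2 1, dM 2 2, (FM 0 0).1, (FM 0 0).2, (FM 2 0).1, (FM 2 0).2, (FM 0 1).1, (FM 0 1).2, (FM 2 1).1, (FM 2 1).2, (FM 0 2).1, (FM 0 2).2, (FM 2 2).1, (FM 2 2).2, (GM 0 0).1, (GM 0 0).2, (GM 1 0).1, (GM 1 0).2, (GM 2 0).1, (GM 2 0).2, (GM 0 2).1, (GM 0 2).2, (GM 1 2).1, (GM 1 2).2, (GM 2 2).1, (GM 2 2).2, mul_nonneg hK (dM 0 0), mul_nonneg hc1 (dM 0 0), mul_nonneg hc2 (dM 0 0), mul_nonneg hK (dM 1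 0), mul_nonneg hc1 (dM 1 0), mul_nonneg hc2 (dM 1 0), mul_nonneg hK (dM 2 0), mul_nonneg hc1 (dM 2 0), mul_nonneg hc2 (dM 2 0), mul_nonneg hK (dM 0 1), mul_nonneg hc1 (dM 0 1), mul_nonneg hc2 (dM 0 1), mul_nonneg hK (dM 2 1), mul_nonneg hc1 (dM 2 1), mul_nonneg hc2 (dM 2 1), mul_nonneg hK (dM 0 2), mul_nonneg hc1 (dM 0 2), mul_nonneg hc2 (dM 0 2), mul_nonneg hK (dM 1 2), mul_nonneg hc1 (dM 1 2), mul_nonneg hc2 (dM 1 2), mul_nonneg hK (dM 2 2), mul_nonneg hc1 (dM 2 2), mul_nonneg hc2 (dM 2 2)]
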